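/- Let m ≥ 2 and ℓ ≥ 2m be integers with ℓ even, and let S* = ⟨mℓ, mℓ+m, mℓ+2m, 2m(ℓ+1)+1, m(ℓ/2+1)ℓ+1⟩. Then the genus of S* equals (1/4)mℓ² + m(m−1)ℓ + (m−1)(m−2). -/

import Mathlib

open Finset

/-- gaps of T = ⟨l, l+1, l+2⟩ (l = 2*lh) -/
def Tgap (l lh : ℕ) : Finset ℕ :=
  (range lh).biUnion (fun q => (Ioo (2*q) l).image (fun r => q*l + r))

/-- gap set of S in residue class c -/
def GF (l lh c : ℕ) : Finset ℕ :=
  if c = 0 then Tgap l lh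
  else range (2*(l+1)*c) ∪
    ((Tgap l lh \ {l*lh - l - 2, l*lh - 1}).image (fun s => s + 2*(l+1)*c))

def FG (m l lh : ℕ) : Finset ℕ :=
  (range m).biUnion (fun c => (GF l lh c).image (fun t => m*t + c))

lemma euclid_unique {l q r q' r' : ℕ} (h : q*l + r = q'*l + r')
    (hr : r < l) (hr' : r' < l) : q = q' ∧ r = r' := by
  have hl : 0 < l := Nat.pos_of_ne_zero (by rintro rfl; omega)
  have h1 : (l*q + r) % l = r := by rw [Nat.mul_add_mod, Nat.mod_eq_of_lt hr]
  have h2 : (l*q' + r') % l = r' := by rw [Nat.mul_add_mod, Nat.mod_eq_of_lt hr']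
  have h3 : (l*q + r) / l = q := by
    rw [Nat.mul_add_div hl, Nat.div_eq_of_lt hr, Nat.add_zero]
  have h4 : (l*q' + r') / l = q' := by
    rw [Nat.mul_add_div hl, Nat.div_eq_of_lt hr', Nat.add_zero]
  have e : l*q + r = l*q' + r' := by
    have := h; rw [mul_comm q l, mul_comm q' l] at this; exact this
  constructor
  · rw [← h3, ← h4, e]
  · rw [← h1, ← h2, e]

lemma mem_Tgap {l lh t : ℕ} :
    t ∈ Tgap l lh ↔ ∃ q r, q < lh ∧ 2*q < r ∧ r < l ∧ t = q*l + r := by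
  simp only [Tgap, mem_biUnion, mem_image, mem_Ioo, mem_range]
  constructor
  · rintro ⟨q, hq, r, ⟨h1, h2⟩, rfl⟩; exact ⟨q, r, hq, h1, h2, rfl⟩
  · rintro ⟨q, r, hq, h1, h2, rfl⟩; exact ⟨q, hq, r, ⟨h1, h2⟩, rfl⟩

lemma Tgap_lt {l lh t : ℕ} (h : t ∈ Tgap l lh) : t < l*lh := by
  rw [mem_Tgap] at h
  obtain ⟨q, r, hq, h1, h2, rfl⟩ := h
  have : (q+1)*l ≤ lh*l := Nat.mul_le_mul_right l hq
  have e1 : (q+1)*l = q*l + l := by ring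
  have e2 : lh*l = l*lh := by ring
  omega

lemma norm_rep {l : ℕ} (hl : 0 < l) :
    ∀ r q t, r ≤ 2*q → t = q*l + r →
      ∃ q' r', r' ≤ 2*q' ∧ r' < l ∧ t = q'*l + r' := by
  intro r
  induction r using Nat.strong_induction_on with
  | _ r ih =>
    intro q t hr ht
    by_cases h : r < l
    · exact ⟨q, r, hr, h, ht⟩
    · refine ih (r - l) (by omega) (q+1) t (by omega) ?_
      have : (q+1)*l = q*l + l := by ring
      omega

/-- membership in semigroup T characterized by non-membership in Tgap -/
lemma T_iff_not_Tgap {l lh t : ℕ} (hl : l = 2*lh) (hlh : 2 ≤ lh) :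
    (∃ q r, r ≤ 2*q ∧ t = q*l + r) ↔ t ∉ Tgap l lh := by
  have hl0 : 0 < l := by omega
  constructor
  · rintro ⟨q, r, hr, ht⟩ hmem
    obtain ⟨q', r', hr', hrl', ht'⟩ := norm_rep hl0 r q t hr ht
    rw [mem_Tgap] at hmem
    obtain ⟨q2, r2, hq2, h12, h22, ht2⟩ := hmem
    have := euclid_unique (ht'.symm.trans ht2) hrl' h22
    omega
  · intro hmem
    refine ⟨t/l, t%l, ?_, (Nat.div_add_mod t l).symm.trans (by ring)⟩
    by_contra hcon
    push_neg at hcon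
    rw [mem_Tgap] at hmem
    have hql : t % l < l := Nat.mod_lt t hl0
    -- if t/l ≥ lh then t%l < l = 2lh ≤ 2(t/l), contradiction
    have hqlt : t / l < lh := by
      by_contra hge
      push_neg at hge
      omega
    exact hmem ⟨t/l, t%l, hqlt, hcon, hql,
      ((Nat.div_add_mod t l).symm.trans (by ring))⟩

section
variable {l lh : ℕ}

lemma hll (hl : l = 2*lh) (hlh : 2 ≤ lh) : l + 2 ≤ l*lh := by
  have : l*2 ≤ l*lh := Nat.mul_le_mul_left l hlh
  omega

lemma lh1l (hlh : 2 ≤ lh) : (lh-1)*l + l = lh*l := by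
  rcases Nat.exists_eq_add_of_le hlh with ⟨k, rfl⟩
  have h : 2+k-1 = 1+k := by omega
  rw [h]; ring

lemma lh2l (hlh : 2 ≤ lh) : (lh-2)*l + 2*l = lh*l := by
  rcases Nat.exists_eq_add_of_le hlh with ⟨k, rfl⟩
  have h : 2+k-2 = k := by omega
  rw [h]; ring

/-- window lemma for i = 1 -/
lemma window (hl : l = 2*lh) (hlh : 2 ≤ lh) {s q r : ℕ} (hr : r ≤ 2*q)
    (hs : s = q*l + r + (l*lh - l - 2)) (hlt : s < l*lh) :
    s = l*lh - l - 2 ∨ s = l*lh - l - 2 + l ∨ s = l*lh - 1 := by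
  have h2 := hll hl hlh
  match q with
  | 0 => simp at hs; omega
  | 1 => simp at hs; omega
  | (q+2) =>
    exfalso
    have e : (q+2)*l = q*l + 2*l := by ring
    omega

/-- Δ + l = l*lh - 2 is NOT a gap of T -/
lemma DeltaL_not_Tgap (hl : l = 2*lh) (hlh : 2 ≤ lh) :
    l*lh - 2 ∉ Tgap l lh := by
  have h2 := hll hl hlh
  rw [mem_Tgap]
  rintro ⟨q, r, hq, h1, h2', heq⟩
  have e1 := lh1l (l := l) hlh
  have e2 : lh*l = l*lh := by ring
  have he : q*l + r = (lh-1)*l + (l-2) := by omega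
  have := euclid_unique he h2' (by omega)
  omega

lemma Delta_mem_Tgap (hl : l = 2*lh) (hlh : 2 ≤ lh) :
    l*lh - l - 2 ∈ Tgap l lh := by
  have h2 := hll hl hlh
  rw [mem_Tgap]
  refine ⟨lh-2, l-2, by omega, by omega, by omega, ?_⟩
  have e1 := lh2l (l := l) hlh
  have e2 : lh*l = l*lh := by ring
  omega

lemma E_mem_Tgap (hl : l = 2*lh) (hlh : 2 ≤ lh) :
    l*lh - 1 ∈ Tgap l lh := by
  have h2 := hll hl hlh
  rw [mem_Tgap]
  refine ⟨lh-1, l-1, by omega, by omega, by omega, ?_⟩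
  have e1 := lh1l (l := l) hlh
  have e2 : lh*l = l*lh := by ring
  omega

/-- i ≥ 2 implies the value is out of the window -/
lemma i_ge_two (hl : l = 2*lh) {m e i : ℕ} (hm2 : 2 ≤ m) (hmlh : m ≤ lh)
    (hi : 2 ≤ i) (hei : e + i < m) :
    2*(l+1)*(e+i) + l*lh ≤ 2*(l+1)*e + (l*lh+l)*i := by
  have hlh3 : 3 ≤ lh := by omega
  have key : 2*(l+1)*i + l*lh ≤ (l*lh+l)*i := by
    rcases Nat.exists_eq_add_of_le hi with ⟨j, rfl⟩
    have h1 : 2*(l+1)*j ≤ (l*lh+l)*j := by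
      apply Nat.mul_le_mul_right
      have : l*3 ≤ l*lh := Nat.mul_le_mul_left l hlh3
      omega
    have e1 : 2*(l+1)*(2+j) = 2*(l+1)*j + (4*l+4) := by ring
    have e2 : (l*lh+l)*(2+j) = (l*lh+l)*j + (2*(l*lh) + 2*l) := by ring
    have h3 : l*3 ≤ l*lh := Nat.mul_le_mul_left l hlh3
    omega
  have e3 : 2*(l+1)*(e+i) = 2*(l+1)*e + 2*(l+1)*i := by ring
  omega

end
section
variable {m l lh : ℕ}

lemma Rprime_iff (hl : l = 2*lh) (hlh : 2 ≤ lh) (hm2 : 2 ≤ m) (hmlh : m ≤ lh)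
    {c t : ℕ} (hc : c < m) :
    (∃ e i q r, e + i = c ∧ r ≤ 2*q ∧
        t = q*l + r + 2*(l+1)*e + (l*lh+l)*i) ↔ t ∉ GF l lh c := by
  have h2 := hll hl hlh
  rcases Nat.eq_zero_or_pos c with rfl | hcpos
  · rw [GF, if_pos rfl]
    rw [← T_iff_not_Tgap hl hlh]
    constructor
    · rintro ⟨e, i, q, r, hei, hr, ht⟩
      refine ⟨q, r, hr, ?_⟩
      have he : e = 0 := by omega
      have hi : i = 0 := by omega
      subst he hi
      simpa using ht
    · rintro ⟨q, r, hr, ht⟩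
      exact ⟨0, 0, q, r, by omega, hr, by simpa using ht⟩
  · have hc0 : c ≠ 0 := by omega
    have hmem : t ∈ GF l lh c ↔ t < 2*(l+1)*c ∨
        ∃ s, (s ∈ Tgap l lh ∧ ¬(s = l*lh - l - 2 ∨ s = l*lh - 1)) ∧
          s + 2*(l+1)*c = t := by
      rw [GF, if_neg hc0]
      simp [mem_union, mem_range, mem_image, mem_sdiff, mem_insert, mem_singleton]
    rw [hmem]
    constructor
    · rintro ⟨e, i, q, r, hei, hr, ht⟩
      push_neg
      match i with
      | 0 =>
        have he : e = c := by omega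
        subst he
        have hts : t = (q*l + r) + 2*(l+1)*e := by omega
        constructor
        · omega
        · rintro s ⟨hsT, hsne⟩ hst
          have hs : s = q*l + r := by omega
          exact ((T_iff_not_Tgap hl hlh).mp ⟨q, r, hr, hs⟩) hsT
      | 1 =>
        have he : c = e + 1 := by omega
        have ering : 2*(l+1)*(e+1) = 2*(l+1)*e + (2*l+2) := by ring
        have hts : t = (q*l + r + (l*lh - l - 2)) + 2*(l+1)*c := by
          rw [he, ering]; omega
        constructor
        · omega
        · rintro s ⟨hsT, hsne⟩ hst
          have hs : s = q*l + r + (l*lh - l - 2) := by omega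
          have hwin := window hl hlh hr hs (Tgap_lt hsT)
          rcases hwin with h | h | h
          · exact hsne.1 h
          · exact DeltaL_not_Tgap hl hlh (by rw [show l*lh - 2 = s by omega] ; exact hsT)
          · exact hsne.2 h
      | (i+2) =>
        have hbig := i_ge_two hl hm2 hmlh (i := i+2) (e := e) (by omega) (by omega)
        rw [hei] at hbig
        have hts : 2*(l+1)*c + l*lh ≤ t := by omega
        constructor
        · omega
        · rintro s ⟨hsT, _⟩ hst
          have := Tgap_lt hsT
          omega
    · intro hmem2
      push_neg at hmem2
      obtain ⟨ht0, hns⟩ := hmem2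
      set s := t - 2*(l+1)*c with hsdef
      have hts : t = s + 2*(l+1)*c := by omega
      by_cases hsT : s ∈ Tgap l lh
      · have hor : s = l*lh - l - 2 ∨ s = l*lh - 1 := by
          by_contra hcon
          push_neg at hcon
          exact absurd hts.symm (hns s ⟨hsT, by tauto⟩)
        obtain ⟨e, he⟩ : ∃ e, c = e + 1 := ⟨c - 1, by omega⟩
        have ering : 2*(l+1)*(e+1) = 2*(l+1)*e + (2*l+2) := by ring
        rcases hor with h | h
        · refine ⟨e, 1, 0, 0, by omega, by omega, ?_⟩
          simp only [mul_one]
          rw [he, ering] at hts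
          omega
        · refine ⟨e, 1, 1, 1, by omega, by omega, ?_⟩
          simp only [one_mul, mul_one]
          rw [he, ering] at hts
          omega
      · obtain ⟨q, r, hr, hs⟩ := (T_iff_not_Tgap hl hlh).mpr hsT
        exact ⟨c, 0, q, r, by omega, hr, by omega⟩

end
section
variable {m l lh : ℕ}

lemma Q_iff_R (hl : l = 2*lh) (hm2 : 2 ≤ m) (n : ℕ) :
    (∃ x₁ x₂ x₃ x₄ x₅ : ℕ,
        n = x₁ * (m * l) + x₂ * (m * l + m) + x₃ * (m * l + 2 * m)
          + x₄ * (2 * m * (l + 1) + 1) + x₅ * (m * (l / 2 + 1) * l + 1)) ↔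
    (∃ e i q r, e + i < m ∧ r ≤ 2*q ∧
        n = m*(q*l + r + 2*(l+1)*e + (l*lh+l)*i) + (e+i)) := by
  have hd : l / 2 = lh := by omega
  rw [hd]
  constructor
  · rintro ⟨x1, x2, x3, x4, x5, hn⟩
    have hdm := Nat.div_add_mod (x4 + x5) m
    set k := (x4 + x5) / m with hkdef
    set c := (x4 + x5) % m with hcdef
    have hc : c < m := Nat.mod_lt _ (by omega)
    set i := min x5 c with hidef
    set e := c - i with hedef
    set d5 := x5 - i with hd5def
    set d4 := x4 - e with hd4def
    have hx5 : x5 = i + d5 := by omega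
    have hx4 : x4 = e + d4 := by omega
    have hei : e + i = c := by omega
    have hsum : d4 + d5 = m * k := by omega
    have hk : k ≤ m * k := Nat.le_mul_of_pos_left k (by omega)
    have hkd : k ≤ d4 + d5 := by omega
    have hd5b : d5 ≤ (lh+1)*d5 := Nat.le_mul_of_pos_left d5 (by omega)
    refine ⟨e, i, x1+x2+x3+2*d4+(lh+1)*d5, x2+2*x3+2*d4+k, by omega, by omega, ?_⟩
    rw [hx4, hx5] at hn
    have h1 : x1 * (m * l) + x2 * (m * l + m) + x3 * (m * l + 2 * m)
          + (e+d4) * (2 * m * (l + 1) + 1) + (i+d5) * (m * (lh + 1) * l + 1)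
        = m*((x1+x2+x3+2*d4+(lh+1)*d5)*l + (x2+2*x3+2*d4) + 2*(l+1)*e + (l*lh+l)*i)
          + (e+i) + (d4+d5) := by ring
    have h3 : m*((x1+x2+x3+2*d4+(lh+1)*d5)*l + (x2+2*x3+2*d4+k) + 2*(l+1)*e + (l*lh+l)*i)
        = m*((x1+x2+x3+2*d4+(lh+1)*d5)*l + (x2+2*x3+2*d4) + 2*(l+1)*e + (l*lh+l)*i)
          + m*k := by ring
    omega
  · rintro ⟨e, i, q, r, hei, hr, hn⟩
    set s3 := r / 2 with hs3
    set s2 := r % 2 with hs2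
    set x1 := q - s3 - s2 with hx1
    have hq' : q = x1 + s3 + s2 := by omega
    have hr' : r = 2*s3 + s2 := by omega
    refine ⟨x1, s2, s3, e, i, ?_⟩
    rw [hn, hq', hr']
    ring

lemma R_iff_notFG (hl : l = 2*lh) (hlh : 2 ≤ lh) (hm2 : 2 ≤ m) (hmlh : m ≤ lh)
    (n : ℕ) :
    (∃ e i q r, e + i < m ∧ r ≤ 2*q ∧
        n = m*(q*l + r + 2*(l+1)*e + (l*lh+l)*i) + (e+i)) ↔ n ∉ FG m l lh := by
  have hm0 : 0 < m := by omega
  have hmemFG : n ∈ FG m l lh ↔ n / m ∈ GF l lh (n % m) := by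
    constructor
    · intro h
      simp only [FG, mem_biUnion, mem_image, mem_range] at h
      obtain ⟨c, hc, t, ht, hn⟩ := h
      have e1 : (m*t + c) % m = c := by rw [Nat.mul_add_mod, Nat.mod_eq_of_lt hc]
      have e2 : (m*t + c) / m = t := by
        rw [Nat.mul_add_div hm0, Nat.div_eq_of_lt hc, Nat.add_zero]
      rw [hn] at e1 e2
      rw [e1, e2]
      exact ht
    · intro h
      simp only [FG, mem_biUnion, mem_image, mem_range]
      exact ⟨n % m, Nat.mod_lt _ hm0, n / m, h, Nat.div_add_mod n m⟩
  rw [hmemFG, ← Rprime_iff hl hlh hm2 hmlh (Nat.mod_lt n hm0)]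
  constructor
  · rintro ⟨e, i, q, r, hei, hr, hn⟩
    have e1 : (m*(q*l + r + 2*(l+1)*e + (l*lh+l)*i) + (e+i)) % m = e + i := by
      rw [Nat.mul_add_mod, Nat.mod_eq_of_lt hei]
    have e2 : (m*(q*l + r + 2*(l+1)*e + (l*lh+l)*i) + (e+i)) / m
        = q*l + r + 2*(l+1)*e + (l*lh+l)*i := by
      rw [Nat.mul_add_div hm0, Nat.div_eq_of_lt hei, Nat.add_zero]
    rw [← hn] at e1 e2
    exact ⟨e, i, q, r, e1.symm, hr, e2⟩
  · rintro ⟨e, i, q, r, hei, hr, ht⟩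
    have hmod := Nat.mod_lt n hm0
    refine ⟨e, i, q, r, by omega, hr, ?_⟩
    rw [← ht, hei]
    exact (Nat.div_add_mod n m).symm

end
section
variable {m l lh : ℕ}

lemma sum_odds : ∀ k : ℕ, (∑ j ∈ range k, (2*j+1)) = k*k := by
  intro k
  induction k with
  | zero => simp
  | succ n ih => rw [Finset.sum_range_succ, ih]; ring

lemma card_Tgap (hl : l = 2*lh) (hlh : 2 ≤ lh) : (Tgap l lh).card = lh*lh := by
  rw [Tgap, Finset.card_biUnion]
  · have hcongr : ∀ q ∈ range lh,
        ((Ioo (2*q) l).image (fun r => q*l + r)).card = 2*(lh-1-q)+1 := by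
      intro q hq
      rw [mem_range] at hq
      rw [Finset.card_image_of_injective _ (fun a b h => by omega), Nat.card_Ioo]
      omega
    rw [Finset.sum_congr rfl hcongr, Finset.sum_range_reflect (fun j => 2*j+1) lh,
      sum_odds]
  · intro q hq q' hq' hne
    rw [Function.onFun, Finset.disjoint_left]
    rintro x hx hx'
    simp only [mem_image, mem_Ioo] at hx hx'
    obtain ⟨r, ⟨_, hr2⟩, hxe⟩ := hx
    obtain ⟨r', ⟨_, hr2'⟩, hxe'⟩ := hx'
    exact hne (euclid_unique (hxe.trans hxe'.symm) hr2 hr2').1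

lemma card_GF_zero (hl : l = 2*lh) (hlh : 2 ≤ lh) :
    (GF l lh 0).card = lh*lh := by
  rw [GF, if_pos rfl, card_Tgap hl hlh]

lemma card_GF_pos (hl : l = 2*lh) (hlh : 2 ≤ lh) {c : ℕ} (hc : 0 < c) :
    (GF l lh c).card = 2*(l+1)*c + (lh*lh - 2) := by
  have h2 := hll hl hlh
  rw [GF, if_neg (by omega)]
  rw [Finset.card_union_of_disjoint]
  · rw [Finset.card_range, Finset.card_image_of_injective _ (fun a b h => by omega)]
    congr 1
    rw [Finset.card_sdiff_of_subset]
    · rw [card_Tgap hl hlh]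
      congr 1
      rw [Finset.card_insert_of_notMem (by simp; omega), Finset.card_singleton]
    · intro x hx
      simp only [mem_insert, mem_singleton] at hx
      rcases hx with rfl | rfl
      · exact Delta_mem_Tgap hl hlh
      · exact E_mem_Tgap hl hlh
  · rw [Finset.disjoint_left]
    rintro x hx hx'
    rw [mem_range] at hx
    simp only [mem_image] at hx'
    obtain ⟨s, _, hs⟩ := hx'
    omega

lemma sum_twos : ∀ k : ℕ, (∑ j ∈ range k, 2*(j+1)) = k*(k+1) := by
  intro k
  induction k with
  | zero => simp
  | succ n ih => rw [Finset.sum_range_succ, ih]; ring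

lemma card_FG (hl : l = 2*lh) (hlh : 2 ≤ lh) (hm2 : 2 ≤ m) (hmlh : m ≤ lh) :
    (FG m l lh).card = m * l ^ 2 / 4 + m * (m - 1) * l + (m - 1) * (m - 2) := by
  have hm0 : 0 < m := by omega
  have h4 : 4 ≤ lh*lh := Nat.mul_le_mul hlh hlh
  rw [FG, Finset.card_biUnion]
  · have hcongr : ∀ c ∈ range m,
        ((GF l lh c).image (fun t => m*t + c)).card
          = if c = 0 then lh*lh else 2*(l+1)*c + (lh*lh - 2) := by
      intro c hc
      rw [Finset.card_image_of_injective _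
        (fun a b h => Nat.eq_of_mul_eq_mul_left hm0 (by omega : m*a = m*b))]
      rcases Nat.eq_zero_or_pos c with rfl | hcpos
      · rw [if_pos rfl, card_GF_zero hl hlh]
      · rw [if_neg (by omega), card_GF_pos hl hlh hcpos]
    rw [Finset.sum_congr rfl hcongr]
    obtain ⟨M, rfl⟩ : ∃ M, m = M + 1 := ⟨m - 1, by omega⟩
    rw [Finset.sum_range_succ', if_pos rfl]
    have hcongr2 : ∀ i ∈ range M,
        (if i + 1 = 0 then lh*lh else 2*(l+1)*(i+1) + (lh*lh - 2))
          = (l+1)*(2*(i+1)) + (lh*lh - 2) := by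
      intro i _
      rw [if_neg (by omega)]
      ring_nf
    rw [Finset.sum_congr rfl hcongr2, Finset.sum_add_distrib, ← Finset.mul_sum,
      sum_twos, Finset.sum_const, Finset.card_range, smul_eq_mul]
    -- arithmetic finale
    have hM1 : 1 ≤ M := by omega
    have hdiv : (M+1) * l ^ 2 / 4 = (M+1)*(lh*lh) := by
      have he : (M+1) * l ^ 2 = 4 * ((M+1)*(lh*lh)) := by rw [hl]; ring
      rw [he, Nat.mul_div_cancel_left _ (by norm_num)]
    rw [hdiv, hl]
    have e1 : M + 1 - 1 = M := by omega
    have e2 : M + 1 - 2 = M - 1 := by omega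
    rw [e1, e2]
    obtain ⟨K, hK⟩ : ∃ K, lh*lh = K + 2 := ⟨lh*lh - 2, by omega⟩
    obtain ⟨M', rfl⟩ : ∃ M', M = M' + 1 := ⟨M - 1, by omega⟩
    rw [show lh*lh - 2 = K from by omega, show M' + 1 - 1 = M' from by omega, hK]
    ring
  · intro c hc c' hc' hne
    rw [Finset.mem_coe, mem_range] at hc hc'
    rw [Function.onFun, Finset.disjoint_left]
    rintro x hx hx'
    simp only [mem_image] at hx hx'
    obtain ⟨t, _, hxe⟩ := hx
    obtain ⟨t', _, hxe'⟩ := hx'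
    apply hne
    have h1 : (m*t + c) % m = c := by rw [Nat.mul_add_mod, Nat.mod_eq_of_lt hc]
    have h2 : (m*t' + c') % m = c' := by rw [Nat.mul_add_mod, Nat.mod_eq_of_lt hc']
    rw [hxe] at h1
    rw [hxe'] at h2
    rw [← h1, ← h2]

end
theorem genus_Sstar_general_even
    (m l : ℕ) (hm : 2 ≤ m) (hl : 2 * m ≤ l) (hle : Even l) :
    {n : ℕ | ¬ ∃ x₁ x₂ x₃ x₄ x₅ : ℕ,
        n = x₁ * (m * l) + x₂ * (m * l + m) + x₃ * (m * l + 2 * m)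
          + x₄ * (2 * m * (l + 1) + 1) + x₅ * (m * (l / 2 + 1) * l + 1)}.ncard
      = m * l ^ 2 / 4 + m * (m - 1) * l + (m - 1) * (m - 2) := by
  obtain ⟨lh, hlh2⟩ := hle
  have hl2 : l = 2 * lh := by omega
  have hlh : 2 ≤ lh := by omega
  have hmlh : m ≤ lh := by omega
  have hset : {n : ℕ | ¬ ∃ x₁ x₂ x₃ x₄ x₅ : ℕ,
        n = x₁ * (m * l) + x₂ * (m * l + m) + x₃ * (m * l + 2 * m)
          + x₄ * (2 * m * (l + 1) + 1) + x₅ * (m * (l / 2 + 1) * l + 1)}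
      = ↑(FG m l lh) := by
    ext n
    simp only [Set.mem_setOf_eq, Finset.coe_sort_coe, Finset.mem_coe]
    rw [Q_iff_R hl2 hm n, R_iff_notFG hl2 hlh hm hmlh n, not_not]
  rw [hset, Set.ncard_coe_finset, card_FG hl2 hlh hm hmlh]
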